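/- Let (b_n) be a D-sequence with b_{n+1}/b_n → ∞. Then the dual group of (ℤ, τ_b) equals the dual group of (ℤ, λ_b); both equal the subgroup of ℝ/ℤ-valued characters generated by {k ↦ k/b_n + ℤ : n ∈ ℕ}, i.e., the characters k ↦ (a k / b_n) + ℤ with a ∈ ℤ, n ∈ ℕ. -/

import Mathlib

open Filter


def IsDSeq (b : ℕ → ℕ) : Prop :=
  b 0 = 1 ∧ (∀ n, b n ∣ b (n + 1)) ∧ ∀ n, b n ≠ b (n + 1)


lemma normc (r : ℝ) : ‖(↑r : AddCircle (1:ℝ))‖ = |r - round r| := by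
  rw [AddCircle.norm_eq]; simp

lemma coe_int_zero (z : ℤ) : ((z:ℝ) : AddCircle (1:ℝ)) = 0 := by
  rw [AddCircle.coe_eq_zero_iff]; exact ⟨z, by simp⟩

lemma coe_shift (r : ℝ) (z : ℤ) : ((r + z : ℝ) : AddCircle (1:ℝ)) = (↑r : AddCircle (1:ℝ)) := by
  have : ((r + z : ℝ) : AddCircle (1:ℝ)) = (↑r : AddCircle (1:ℝ)) + ((z:ℝ) : AddCircle (1:ℝ)) := rfl
  rw [this, coe_int_zero, add_zero]

lemma normc_le_half (r : ℝ) : ‖(↑r : AddCircle (1:ℝ))‖ ≤ 1/2 := by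
  rw [normc]; exact abs_sub_round r

lemma normc_abs (r : ℝ) (h : |r| < 1/2) : ‖(↑r : AddCircle (1:ℝ))‖ = |r| := by
  rw [normc]
  have : round r = 0 := by
    rw [round_eq_zero_iff]
    obtain ⟨h1, h2⟩ := abs_lt.1 h
    exact ⟨by linarith, by linarith⟩
  rw [this]; simp

lemma normc_le_abs (r : ℝ) : ‖(↑r : AddCircle (1:ℝ))‖ ≤ |r| := by
  rcases le_or_gt (1/2) (|r|) with h | h
  · exact le_trans (normc_le_half r) h
  · rw [normc_abs r h]

lemma contOfZero (t : TopologicalSpace ℤ) (ht : @IsTopologicalAddGroup ℤ t _)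
    (χ : ℤ →+ AddCircle (1:ℝ)) (h : @Filter.Tendsto ℤ (AddCircle (1:ℝ)) χ (@nhds ℤ t 0) (nhds 0)) :
    @Continuous ℤ (AddCircle (1:ℝ)) t _ χ := by
  letI := t
  rw [continuous_iff_continuousAt]
  intro k₀
  unfold ContinuousAt
  rw [← map_add_left_nhds_zero k₀, Filter.tendsto_map'_iff]
  have : (χ ∘ (k₀ + ·)) = fun k => χ k₀ + χ k := by
    funext k; simp [map_add]
  rw [this]
  simpa using (tendsto_const_nhds.add h)

lemma bpos (b : ℕ → ℕ) (hb : IsDSeq b) : ∀ n, 0 < b n := by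
  obtain ⟨h0, hdvd, hne⟩ := hb
  intro n
  match n with
  | 0 => simp [h0]
  | (k+1) =>
    by_contra h
    push_neg at h
    have h' : b (k+1) = 0 := by omega
    have h2 : b (k+1+1) = 0 := by
      have := hdvd (k+1); rw [h'] at this; exact zero_dvd_iff.mp this
    exact hne (k+1) (by omega)

lemma bmono (b : ℕ → ℕ) (hb : IsDSeq b) : StrictMono b := by
  apply strictMono_nat_of_lt_succ
  intro n
  have h1 := Nat.le_of_dvd (bpos b hb (n+1)) (hb.2.1 n)
  have h2 := hb.2.2 n
  omega

lemma bdvd (b : ℕ → ℕ) (hb : IsDSeq b) {n N : ℕ} (h : n ≤ N) : b n ∣ b N := by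
  induction N with
  | zero => simp at h; simp [h]
  | succ N ih =>
    rcases Nat.lt_or_ge n (N+1) with h' | h'
    · exact dvd_trans (ih (by omega)) (hb.2.1 N)
    · have : n = N + 1 := by omega
      simp [this]

def InvP (b : ℕ → ℕ) (x : ℝ) (m : ℕ) (k : ℤ) (M : ℕ) (s : ℝ) : Prop :=
  (∀ n, n ≤ M → ∃ z : ℤ, |(k:ℝ)/(b n) - z| ≤ 1/(8*m)) ∧
  (∀ n, M < n → ∃ z : ℤ, |(k:ℝ)/(b n) - z| ≤ (b (M+1) : ℝ)/((8*m) * (b n))) ∧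
  (∃ w : ℤ, (k:ℝ)*x = s + w) ∧ 0 ≤ s ∧ s ≤ 1/4

set_option maxHeartbeats 1000000 in
lemma stepB (b : ℕ → ℕ) (hb : IsDSeq b) (x : ℝ) (m : ℕ) (hm : 0 < m)
    (hdsm : ∀ N, 4*m ≤ b (N+1)/b N → ‖(((b N:ℝ) * x : ℝ) : AddCircle (1:ℝ))‖ ≤ 1/8)
    (hd0 : ∀ N, 0 < ‖(((b N:ℝ) * x : ℝ) : AddCircle (1:ℝ))‖)
    (hA : ∀ T, ∃ N, T ≤ N ∧
      1/2 ≤ ((b (N+1)/b N : ℕ) : ℝ) * ‖(((b N:ℝ) * x : ℝ) : AddCircle (1:ℝ))‖)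
    (hqevT : ∃ T, ∀ N, T ≤ N → 32*m ≤ b (N+1)/b N)
    (k : ℤ) (M : ℕ) (s : ℝ) (hInv : InvP b x m k M s) (hs : s ≤ 1/8) :
    ∃ k' M' s', InvP b x m k' M' s' ∧ (1/8 < s' ∨ 1/(64*(m:ℝ)) ≤ s' - s) := by
  have hbpos := bpos b hb
  have hbposR : ∀ n, (0:ℝ) < b n := fun n => by exact_mod_cast hbpos n
  have hbmono := bmono b hb
  have hmR : (0:ℝ) < m := by exact_mod_cast hm
  obtain ⟨h1, h2, ⟨w, hw⟩, hs0, hs14⟩ := hInv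
  obtain ⟨A, hAq⟩ := hqevT
  obtain ⟨N, hNge, hNqd⟩ := hA (max (max (M+1) A) (2 * b (M+1) + 1))
  set q : ℕ := b (N+1) / b N with hqdef
  set d : ℝ := ‖(((b N:ℝ) * x : ℝ) : AddCircle (1:ℝ))‖ with hddef
  have hMN : M < N := by
    have := le_trans (le_trans (le_max_left (M+1) A) (le_max_left _ _)) hNge; omega
  have hNq : 32*m ≤ q := hAq N (le_trans (le_trans (le_max_right (M+1) A) (le_max_left _ _)) hNge)
  have hN2b : 2 * b (M+1) ≤ b (N+1) := by
    have h' : 2 * b (M+1) + 1 ≤ N := le_trans (le_max_right _ _) hNge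
    have h'' : N + 1 ≤ b (N+1) := hbmono.le_apply
    omega
  have hq : b (N+1) = b N * q := (Nat.mul_div_cancel' (hb.2.1 N)).symm
  have hqbR : (q : ℝ) * b N = b (N+1) := by
    rw [mul_comm]; exact_mod_cast congrArg (fun t : ℕ => (t:ℝ)) hq.symm
  have hd18 : d ≤ 1/8 := hdsm N (by omega)
  have hdpos : 0 < d := hd0 N
  have hy : d = |(b N : ℝ) * x - round ((b N : ℝ) * x)| := normc _
  set y : ℝ := (b N : ℝ) * x - round ((b N : ℝ) * x) with hydef
  have hyc : (b N : ℝ) * x = y + round ((b N : ℝ) * x) := by rw [hydef]; ring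
  set C : ℕ := q / (16*m) with hCdef
  have hC1 : 1 ≤ C := by
    rw [hCdef, Nat.one_le_div_iff (by omega : 0 < 16*m)]
    omega
  have hCub : (C : ℝ) * (16*m) ≤ q := by
    exact_mod_cast Nat.div_mul_le_self q (16*m)
  have hClb : (q : ℝ) ≤ (C:ℝ) * (32*m) := by
    have h5 : 16*(m:ℝ)*(C:ℝ) + ((q % (16*m) : ℕ) : ℝ) = q := by
      exact_mod_cast Nat.div_add_mod q (16*m)
    have h6 : ((q % (16*m) : ℕ) : ℝ) < 16*m := by
      exact_mod_cast Nat.mod_lt q (show 0 < 16*m by omega)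
    have h9 : (1:ℝ) ≤ C := by exact_mod_cast hC1
    nlinarith
  set c : ℕ := min C ⌊(1/4 - s)/d⌋₊ with hcdef
  set ε : ℤ := if 0 ≤ y then 1 else -1 with hεdef
  have hεy : (ε : ℝ) * y = d := by
    rw [hy, hεdef]
    rcases le_or_gt 0 y with h | h
    · rw [if_pos h]; simp [abs_of_nonneg h]
    · rw [if_neg (not_le.mpr h)]; simp [abs_of_neg h]
  have hcC : c ≤ C := min_le_left _ _
  have hcd_le : (c:ℝ) * d ≤ 1/4 - s := by
    have h' : (c:ℝ) ≤ (1/4 - s)/d := by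
      have h'' : (c:ℝ) ≤ (⌊(1/4 - s)/d⌋₊ : ℝ) := by
        exact_mod_cast min_le_right C ⌊(1/4 - s)/d⌋₊
      exact le_trans h'' (Nat.floor_le (div_nonneg (by linarith) (le_of_lt hdpos)))
    calc (c:ℝ) * d ≤ ((1/4 - s)/d) * d := by nlinarith
    _ = 1/4 - s := div_mul_cancel₀ _ (ne_of_gt hdpos)
  have hcbN : (c:ℝ) * b N ≤ (b (N+1):ℝ)/(16*m) := by
    have ha1 : (c:ℝ) ≤ C := by exact_mod_cast hcC
    rw [le_div_iff₀ (by linarith [hmR] : (0:ℝ) < 16*m)]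
    calc (c:ℝ) * (b N) * (16*m) = ((c:ℝ) * (16*m)) * b N := by ring
      _ ≤ ((C:ℝ) * (16*m)) * b N := by
          apply mul_le_mul_of_nonneg_right ?_ (le_of_lt (hbposR N))
          apply mul_le_mul_of_nonneg_right ha1 (by linarith [hmR])
      _ ≤ (q:ℝ) * b N := mul_le_mul_of_nonneg_right hCub (le_of_lt (hbposR N))
      _ = b (N+1) := hqbR
  refine ⟨k + ε * c * (b N : ℤ), N, s + c * d, ⟨?_, ?_, ?_, by positivity, by linarith⟩, ?_⟩
  · -- (1') n ≤ N
    intro n hn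
    have hzn : ∃ z : ℤ, |(k:ℝ)/(b n) - z| ≤ 1/(8*m) := by
      rcases le_or_gt n M with h | h
      · exact h1 n h
      · obtain ⟨z, hz⟩ := h2 n h
        refine ⟨z, le_trans hz ?_⟩
        rw [div_le_div_iff₀ (mul_pos (by linarith [hmR] : (0:ℝ) < 8*m) (hbposR n)) (by linarith [hmR] : (0:ℝ) < 8*m)]
        have : (b (M+1) : ℝ) ≤ b n := by exact_mod_cast hbmono.monotone h
        nlinarith [hbposR n, hmR]
    obtain ⟨z, hz⟩ := hzn
    obtain ⟨D, hD⟩ : ∃ D : ℤ, (b N : ℤ) = (b n : ℤ) * D :=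
      Int.natCast_dvd_natCast.mpr (bdvd b hb hn)
    refine ⟨z + ε * c * D, ?_⟩
    have hDR : ((b N : ℕ) : ℝ) = (b n : ℝ) * (D : ℝ) := by exact_mod_cast hD
    have e2 : ((k + ε * c * (b N : ℤ) : ℤ) : ℝ)/(b n) - ((z + ε * c * D : ℤ) : ℝ)
        = (k:ℝ)/(b n) - z := by
      push_cast
      rw [hDR]
      have hbn' : (b n:ℝ) ≠ 0 := ne_of_gt (hbposR n)
      field_simp
      try ring
    rw [e2]; exact hz
  · -- (2') n > N
    intro n hn
    obtain ⟨z, hz⟩ := h2 n (lt_trans hMN hn)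
    refine ⟨z, ?_⟩
    have hbn := hbposR n
    have e3 : ((k + ε * c * (b N : ℤ) : ℤ) : ℝ)/(b n) - z
        = ((k:ℝ)/(b n) - z) + ((ε:ℝ) * c * (b N:ℝ))/(b n) := by
      push_cast; ring
    have hεabs : |(ε:ℝ)| = 1 := by
      rw [hεdef]; split_ifs <;> simp
    have habs2 : |((ε:ℝ) * c * (b N:ℝ))/(b n)| = ((c:ℝ) * b N)/(b n) := by
      rw [abs_div, abs_of_pos hbn, abs_mul, abs_mul, hεabs, one_mul,
        Nat.abs_cast, abs_of_pos (hbposR N)]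
    have hbM2 : (b (M+1):ℝ)/(8*m) ≤ (b (N+1):ℝ)/(16*m) := by
      have h10 : (2:ℝ) * b (M+1) ≤ b (N+1) := by exact_mod_cast hN2b
      rw [div_le_div_iff₀ (by linarith [hmR] : (0:ℝ) < 8*m) (by linarith [hmR] : (0:ℝ) < 16*m)]
      nlinarith [hbposR (M+1), hbposR (N+1), hmR]
    have keyineq : (b (M+1):ℝ)/(8*m) + (c:ℝ) * b N ≤ (b (N+1):ℝ)/(8*m) := by
      have : (b (N+1):ℝ)/(16*m) + (b (N+1):ℝ)/(16*m) = (b (N+1):ℝ)/(8*m) := by ring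
      linarith
    calc |((k + ε * c * (b N : ℤ) : ℤ) : ℝ)/(b n) - z|
        = |((k:ℝ)/(b n) - z) + ((ε:ℝ) * c * (b N:ℝ))/(b n)| := by rw [e3]
      _ ≤ |(k:ℝ)/(b n) - z| + |((ε:ℝ) * c * (b N:ℝ))/(b n)| := abs_add_le _ _
      _ ≤ (b (M+1) : ℝ)/((8*m) * (b n)) + ((c:ℝ) * b N)/(b n) := by
          rw [habs2]; exact add_le_add hz (le_refl _)
      _ = ((b (M+1):ℝ)/(8*m) + (c:ℝ) * b N)/(b n) := by
          rw [← div_div, ← add_div]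
      _ ≤ ((b (N+1):ℝ)/(8*m))/(b n) := by gcongr
      _ = (b (N+1) : ℝ)/((8*m) * (b n)) := by
          rw [div_div]
  · -- (3') congruence
    refine ⟨w + ε * c * round ((b N : ℝ) * x), ?_⟩
    push_cast
    linear_combination hw + (ε:ℝ) * (c:ℝ) * hyc + (c:ℝ) * hεy
  · -- progress
    rcases le_or_gt C ⌊(1/4 - s)/d⌋₊ with hbr | hbr
    · right
      have hcC' : c = C := by rw [hcdef, min_eq_left hbr]
      have hhalf : (1:ℝ)/2 ≤ (q:ℝ) * d := hNqd
      have hCd : (q:ℝ) * d / (32*m) ≤ (C:ℝ) * d := by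
        rw [div_le_iff₀ (by linarith [hmR] : (0:ℝ) < 32*m)]
        nlinarith [hmR, hdpos]
      have hfin : 1/(64*(m:ℝ)) ≤ (C:ℝ) * d := by
        have : 1/(64*(m:ℝ)) ≤ (q:ℝ) * d / (32*m) := by
          rw [div_le_div_iff₀ (by linarith [hmR] : (0:ℝ) < 64*m) (by linarith [hmR] : (0:ℝ) < 32*m)]
          nlinarith [hmR]
        linarith
      rw [hcC']; linarith
    · left
      have hcf : c = ⌊(1/4 - s)/d⌋₊ := by rw [hcdef, min_eq_right (le_of_lt hbr)]
      have hfl : (1/4 - s)/d - 1 < (⌊(1/4 - s)/d⌋₊ : ℝ) := Nat.sub_one_lt_floor _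
      have hgt : (c:ℝ) * d > 1/4 - s - d := by
        rw [hcf]
        have : ((1/4 - s)/d - 1) * d < (⌊(1/4 - s)/d⌋₊ : ℝ) * d := by nlinarith
        calc (⌊(1/4 - s)/d⌋₊:ℝ) * d > ((1/4 - s)/d - 1) * d := this
          _ = (1/4 - s) - d := by
              rw [sub_mul, div_mul_cancel₀ _ (ne_of_gt hdpos), one_mul]
      linarith

set_option maxHeartbeats 1000000 in
lemma key (b : ℕ → ℕ) (hb : IsDSeq b)
    (hinf : Filter.Tendsto (fun n => (b (n + 1) : ℝ) / b n) Filter.atTop Filter.atTop)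
    (x : ℝ)
    (H : ∀ δ : ℝ, 0 < δ → ∃ m : ℕ, 0 < m ∧ ∀ k : ℤ,
      (∀ n : ℕ, ∃ z : ℤ, |(k:ℝ)/(b n) - z| ≤ 1/(4*m)) →
      ‖(((k:ℝ)*x : ℝ) : AddCircle (1:ℝ))‖ ≤ δ) :
    ∃ (n : ℕ) (a : ℤ), (b n : ℝ) * x = a := by
  have hbpos := bpos b hb
  have hbposR : ∀ n, (0:ℝ) < b n := fun n => by exact_mod_cast hbpos n
  have hbmono := bmono b hb
  -- the quotient sequence
  set q : ℕ → ℕ := fun n => b (n+1) / b n with hq_def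
  have hq : ∀ n, b (n+1) = b n * q n := fun n => (Nat.mul_div_cancel' (hb.2.1 n)).symm
  have hqR : ∀ n, (q n : ℝ) = (b (n+1) : ℝ) / b n := by
    intro n
    rw [eq_div_iff (ne_of_gt (hbposR n))]
    rw [← Nat.cast_mul]
    norm_cast
    rw [hq n]; ring
  have hqev : ∀ A : ℕ, ∀ᶠ N in atTop, A ≤ q N := by
    intro A
    have := hinf.eventually_ge_atTop (A : ℝ)
    filter_upwards [this] with N hN
    have : (A:ℝ) ≤ q N := by rw [hqR]; exact hN
    exact_mod_cast this
  -- distances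
  set d : ℕ → ℝ := fun N => ‖(((b N : ℝ) * x : ℝ) : AddCircle (1:ℝ))‖ with hd_def
  by_contra hcon
  push_neg at hcon
  have hd0 : ∀ N, 0 < d N := by
    intro N
    rcases lt_or_eq_of_le (norm_nonneg ((((b N : ℝ) * x : ℝ)) : AddCircle (1:ℝ))) with h | h
    · exact h
    · exfalso
      have h0 : ‖(((b N : ℝ) * x : ℝ) : AddCircle (1:ℝ))‖ = 0 := h.symm
      rw [norm_eq_zero, AddCircle.coe_eq_zero_iff] at h0
      obtain ⟨z, hz⟩ := h0
      exact hcon N z (by rw [← hz]; simp)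
  have hdhalf : ∀ N, d N ≤ 1/2 := fun N => normc_le_half _
  have hdnn : ∀ N, 0 ≤ d N := fun N => norm_nonneg _
  -- y values
  set y : ℕ → ℝ := fun N => (b N : ℝ) * x - round ((b N : ℝ) * x) with hy_def
  have hy : ∀ N, d N = |y N| := fun N => normc _
  have hyc : ∀ N, (b N : ℝ) * x = y N + round ((b N : ℝ) * x) := by intro N; simp [hy_def]
  have hbsucc : ∀ N, (b (N+1) : ℝ) * x = (q N : ℝ) * ((b N : ℝ) * x) := by
    intro N
    rw [hqR, div_mul_eq_mul_div, eq_div_iff (ne_of_gt (hbposR N))]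
    ring
  -- get m from H at 1/8
  obtain ⟨m, hm, Hm⟩ := H (1/8) (by norm_num)
  have hmR : (0:ℝ) < m := by exact_mod_cast hm
  -- single multiples are in V_m
  have hdsmall : ∀ N, 4*m ≤ q N → d N ≤ 1/8 := by
    intro N hN
    have h8 := Hm (b N : ℤ) ?_
    · simp only [Int.cast_natCast] at h8
      exact h8
    intro n
    rcases le_or_gt n N with h | h
    · refine ⟨((b N / b n : ℕ) : ℤ), ?_⟩
      have e : (((b N / b n : ℕ) : ℤ) : ℝ) = (b N : ℝ)/(b n : ℝ) := by
        rw [Int.cast_natCast, Nat.cast_div (bdvd b hb h) (ne_of_gt (hbposR n))]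
      rw [e, Int.cast_natCast, sub_self, abs_zero]
      positivity
    · refine ⟨0, ?_⟩
      push_cast
      rw [sub_zero, abs_div, abs_of_nonneg (le_of_lt (hbposR N)), abs_of_nonneg (le_of_lt (hbposR n))]
      rw [div_le_div_iff₀ (hbposR n) (by positivity)]
      have h1 : (b (N+1) : ℝ) ≤ b n := by exact_mod_cast hbmono.monotone h
      have h2 : (4*m : ℝ) * b N ≤ (q N : ℝ) * b N := by
        have : (4*m:ℝ) ≤ q N := by exact_mod_cast hN
        nlinarith [hbposR N]
      have h3 : (q N : ℝ) * b N = b (N+1) := by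
        rw [hqR, div_mul_cancel₀]
        exact ne_of_gt (hbposR N)
      nlinarith
  -- case split
  by_cases hAcase : ∃ N₂, ∀ N, N₂ ≤ N → (q N : ℝ) * d N < 1/2
  · -- Case A
    obtain ⟨N₂, hN₂⟩ := hAcase
    obtain ⟨N₃, hN₃⟩ := eventually_atTop.1 (hqev 2)
    set N₀ := max N₂ N₃ with hN₀def
    have hstep : ∀ N, N₀ ≤ N → d (N+1) = (q N : ℝ) * d N := by
      intro N hN
      have hq2 : (q N : ℝ) * d N < 1/2 := hN₂ N (le_trans (le_max_left _ _) hN)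
      have e1 : (b (N+1) : ℝ) * x = (q N : ℝ) * y N + ((q N * round ((b N:ℝ)*x) : ℤ) : ℝ) := by
        rw [hbsucc N]
        push_cast
        linear_combination (q N : ℝ) * (hyc N)
      have e2 : (((b (N+1) : ℝ) * x : ℝ) : AddCircle (1:ℝ))
          = ((((q N : ℝ) * y N : ℝ)) : AddCircle (1:ℝ)) := by
        rw [e1]
        exact coe_shift _ _
      have e3 : d (N+1) = ‖((((q N : ℝ) * y N : ℝ)) : AddCircle (1:ℝ))‖ := by
        rw [hd_def]
        simp only
        rw [e2]
      have habs : |(q N : ℝ) * y N| = (q N : ℝ) * d N := by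
        rw [abs_mul, abs_of_nonneg (by positivity : (0:ℝ) ≤ (q N:ℝ)), ← hy N]
      rw [e3, normc_abs _ (by rw [habs]; linarith [hd0 N]), habs]
    have hgrow : ∀ j : ℕ, 2^j * d N₀ ≤ d (N₀ + j) := by
      intro j
      induction j with
      | zero => simp
      | succ j ih =>
        have hq2 : 2 ≤ q (N₀ + j) := hN₃ (N₀+j) (le_trans (le_max_right _ _) (Nat.le_add_right _ _))
        have hq2R : (2:ℝ) ≤ q (N₀ + j) := by exact_mod_cast hq2
        have e := hstep (N₀+j) (Nat.le_add_right _ _)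
        have : d (N₀ + (j+1)) = (q (N₀+j) : ℝ) * d (N₀+j) := by
          rw [← e]; ring_nf
        rw [this]
        have h0j := hd0 (N₀ + j)
        calc (2:ℝ)^(j+1) * d N₀ = 2 * (2^j * d N₀) := by ring
          _ ≤ 2 * d (N₀ + j) := by linarith
          _ ≤ (q (N₀+j) : ℝ) * d (N₀+j) := by nlinarith
    obtain ⟨j, hj⟩ := pow_unbounded_of_one_lt ((1/2)/(d N₀)) (one_lt_two (α := ℝ))
    have hjj : 1/2 < 2^j * d N₀ := by
      rw [div_lt_iff₀ (hd0 N₀)] at hj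
      linarith
    have := hdhalf (N₀ + j)
    have := hgrow j
    linarith
  · -- Case B
    push_neg at hAcase
    have hA' : ∀ T, ∃ N, T ≤ N ∧
        1/2 ≤ ((b (N+1)/b N : ℕ) : ℝ) * ‖(((b N:ℝ) * x : ℝ) : AddCircle (1:ℝ))‖ := by
      intro T
      obtain ⟨N, hN1, hN2⟩ := hAcase T
      exact ⟨N, hN1, hN2⟩
    have hdsm' : ∀ N, 4*m ≤ b (N+1)/b N → ‖(((b N:ℝ) * x : ℝ) : AddCircle (1:ℝ))‖ ≤ 1/8 :=
      fun N h => hdsmall N h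
    have hqevT : ∃ T, ∀ N, T ≤ N → 32*m ≤ b (N+1)/b N := by
      obtain ⟨T, hT⟩ := eventually_atTop.1 (hqev (32*m))
      exact ⟨T, hT⟩
    have hd0' : ∀ N, 0 < ‖(((b N:ℝ) * x : ℝ) : AddCircle (1:ℝ))‖ := hd0
    -- iterate
    have iter : ∀ j : ℕ, (∃ k M s, InvP b x m k M s ∧ 1/8 < s) ∨
        (∃ k M s, InvP b x m k M s ∧ s ≤ 1/8 ∧ (j:ℝ) * (1/(64*(m:ℝ))) ≤ s) := by
      intro j
      induction j with
      | zero =>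
        right
        refine ⟨0, 0, 0, ⟨?_, ?_, ⟨0, by simp⟩, le_refl _, by norm_num⟩, by norm_num, by simp⟩
        · intro n _
          refine ⟨0, ?_⟩
          simpa using div_nonneg zero_le_one (by positivity : (0:ℝ) ≤ 8*(m:ℝ))
        · intro n _
          refine ⟨0, ?_⟩
          simpa using div_nonneg (Nat.cast_nonneg (b (0+1))) (by positivity : (0:ℝ) ≤ 8*(m:ℝ)*(b n:ℝ))
      | succ j ih =>
        rcases ih with h | ⟨k, M, s, hI, hsle, hslb⟩
        · left; exact h
        · obtain ⟨k', M', s', hI', hor⟩ := stepB b hb x m hm hdsm' hd0' hA' hqevT k M s hI hsle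
          rcases le_or_gt s' (1/8) with h4 | h4
          · right
            refine ⟨k', M', s', hI', h4, ?_⟩
            rcases hor with h5 | h5
            · linarith
            · push_cast
              linarith
          · left; exact ⟨k', M', s', hI', h4⟩
    obtain ⟨j, hj⟩ := exists_nat_gt ((1/8) / (1/(64*(m:ℝ))))
    have hjη : 1/8 < (j:ℝ) * (1/(64*(m:ℝ))) := by
      rw [div_lt_iff₀ (by positivity)] at hj
      linarith
    rcases iter j with ⟨k, M, s, hI, hs8⟩ | ⟨k, M, s, hI, hsle, hslb⟩
    · obtain ⟨hI1, hI2, ⟨w, hw⟩, hs0, hs14⟩ := hI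
      have hmem : ∀ n : ℕ, ∃ z : ℤ, |(k:ℝ)/(b n) - z| ≤ 1/(4*m) := by
        intro n
        rcases le_or_gt n M with h | h
        · obtain ⟨z, hz⟩ := hI1 n h
          refine ⟨z, le_trans hz ?_⟩
          rw [div_le_div_iff₀ (by linarith [hmR] : (0:ℝ) < 8*m) (by linarith [hmR] : (0:ℝ) < 4*m)]
          nlinarith [hmR]
        · obtain ⟨z, hz⟩ := hI2 n h
          refine ⟨z, le_trans hz ?_⟩
          have hble : (b (M+1) : ℝ) ≤ b n := by exact_mod_cast hbmono.monotone h
          rw [div_le_div_iff₀ (mul_pos (by linarith [hmR] : (0:ℝ) < 8*m) (hbposR n))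
            (by linarith [hmR] : (0:ℝ) < 4*m)]
          nlinarith [hbposR n, hmR]
      have hup := Hm k hmem
      have e : (((k:ℝ) * x : ℝ) : AddCircle (1:ℝ)) = ((s : ℝ) : AddCircle (1:ℝ)) := by
        rw [hw]
        exact coe_shift _ _
      have : ‖(((k:ℝ) * x : ℝ) : AddCircle (1:ℝ))‖ = s := by
        rw [e, normc_abs s (by rw [abs_of_nonneg hs0]; linarith), abs_of_nonneg hs0]
      linarith
    · linarith

set_option maxHeartbeats 1000000 in
theorem stmt_17 (b : ℕ → ℕ) (hb : IsDSeq b)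
    (hinf : Filter.Tendsto (fun n => (b (n + 1) : ℝ) / b n) Filter.atTop Filter.atTop)
    (tLin tTau : TopologicalSpace ℤ)
    (hLing : @IsTopologicalAddGroup ℤ tLin _) (hTaug : @IsTopologicalAddGroup ℤ tTau _)
    (hLinb : (@nhds ℤ tLin 0).HasBasis (fun _ : ℕ => True) (fun n => {x : ℤ | (b n : ℤ) ∣ x}))
    (hTaub : (@nhds ℤ tTau 0).HasBasis (fun m : ℕ => 0 < m)
      (fun m => {k : ℤ | ∀ n : ℕ, ∃ z : ℤ, |(k : ℝ) / b n - z| ≤ 1 / (4 * m)})) :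
    ∀ χ : ℤ →+ AddCircle (1 : ℝ),
      (@Continuous ℤ (AddCircle (1 : ℝ)) tTau _ χ ↔ @Continuous ℤ (AddCircle (1 : ℝ)) tLin _ χ) ∧
      (@Continuous ℤ (AddCircle (1 : ℝ)) tTau _ χ ↔
        ∃ (a : ℤ) (n : ℕ), ∀ k : ℤ,
          χ k = ((a * k / (b n : ℝ) : ℝ) : AddCircle (1 : ℝ))) := by
  intro χ
  have hbpos := bpos b hb
  have hbposR : ∀ n, (0:ℝ) < b n := fun n => by exact_mod_cast hbpos n
  have hbmono := bmono b hb
  obtain ⟨x, hx⟩ : ∃ x : ℝ, χ 1 = ↑x := by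
    obtain ⟨x, hx⟩ := QuotientAddGroup.mk_surjective (χ 1)
    exact ⟨x, hx.symm⟩
  have hχ : ∀ k : ℤ, χ k = (((k:ℝ) * x : ℝ) : AddCircle (1:ℝ)) := by
    intro k
    have h1 : χ k = k • χ 1 := by rw [← map_zsmul]; simp
    rw [h1, hx, ← zsmul_eq_mul]; rfl
  -- E → Lcont
  have hEL : (∃ (a : ℤ) (n : ℕ), ∀ k : ℤ, χ k = ((a * k / (b n : ℝ) : ℝ) : AddCircle (1:ℝ)))
      → @Continuous ℤ (AddCircle (1 : ℝ)) tLin _ χ := by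
    rintro ⟨a, n, hE⟩
    apply contOfZero tLin hLing
    have hmem : {x : ℤ | (b n : ℤ) ∣ x} ∈ @nhds ℤ tLin 0 := hLinb.mem_of_mem trivial
    have hev : (fun _ : ℤ => (0 : AddCircle (1:ℝ))) =ᶠ[@nhds ℤ tLin 0] χ := by
      filter_upwards [hmem] with k hk
      obtain ⟨t, ht⟩ := hk
      rw [hE k]
      have e : (a:ℝ) * k / b n = ((a * t : ℤ) : ℝ) := by
        rw [ht]; push_cast
        rw [div_eq_iff (ne_of_gt (hbposR n))]
        ring
      rw [e, coe_int_zero]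
    exact Filter.Tendsto.congr' hev tendsto_const_nhds
  -- nhds comparison
  have hnhds : @nhds ℤ tTau 0 ≤ @nhds ℤ tLin 0 := by
    rw [hLinb.ge_iff]
    intro n _
    rw [hTaub.mem_iff]
    refine ⟨b n, hbpos n, ?_⟩
    intro k hk
    simp only [Set.mem_setOf_eq] at hk ⊢
    have main : ∀ j, j ≤ n → (b j : ℤ) ∣ k := by
      intro j
      induction j with
      | zero =>
        intro _
        have : b 0 = 1 := hb.1
        rw [this]; exact one_dvd k
      | succ j ih =>
        intro hj
        obtain ⟨t, ht⟩ := ih (by omega)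
        obtain ⟨z, hz⟩ := hk (j+1)
        set qj : ℕ := b (j+1) / b j with hqjdef
        have hqj : b (j+1) = b j * qj := (Nat.mul_div_cancel' (hb.2.1 j)).symm
        have hqjpos : 0 < qj := by
          rw [hqjdef]
          exact Nat.div_pos (Nat.le_of_dvd (hbpos (j+1)) (hb.2.1 j)) (hbpos j)
        have hqjR : (0:ℝ) < qj := by exact_mod_cast hqjpos
        have e1 : (k:ℝ)/(b (j+1)) = (t:ℝ)/qj := by
          rw [ht, hqj]
          push_cast
          rw [div_eq_div_iff (ne_of_gt (mul_pos (hbposR j) hqjR)) (ne_of_gt hqjR)]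
          ring
        rw [e1] at hz
        have e2 : |(t:ℝ) - qj * z| ≤ (qj:ℝ)/(4 * b n) := by
          have := mul_le_mul_of_nonneg_left hz (le_of_lt hqjR)
          calc |(t:ℝ) - qj * z| = (qj:ℝ) * |(t:ℝ)/qj - z| := by
                rw [← abs_of_pos hqjR, ← abs_mul]
                congr 1
                field_simp
                rw [abs_of_pos hqjR]; ring
          _ ≤ (qj:ℝ) * (1/(4 * b n)) := by
                apply mul_le_mul_of_nonneg_left hz (le_of_lt hqjR)
          _ = (qj:ℝ)/(4 * b n) := by ring
        have hqjn : (qj : ℝ) ≤ b n := by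
          have h1 : qj ≤ b (j+1) := by
            have := hbpos j
            calc qj ≤ b j * qj := Nat.le_mul_of_pos_left _ this
            _ = b (j+1) := hqj.symm
          have h2 : b (j+1) ≤ b n := hbmono.monotone hj
          exact_mod_cast le_trans h1 h2
        have e3 : |(t:ℝ) - qj * z| < 1 := by
          have hbn := hbposR n
          have : (qj:ℝ)/(4 * b n) ≤ 1/4 := by
            rw [div_le_div_iff₀ (by positivity) (by norm_num)]
            linarith
          linarith
        have e4 : ((t - qj * z : ℤ) : ℝ) = (t:ℝ) - qj * z := by push_cast; ring
        have e5 : t - (qj:ℤ) * z = 0 := by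
          have h5 : |((t - (qj:ℤ) * z : ℤ) : ℝ)| < 1 := by rw [e4]; exact e3
          have h6 : |t - (qj:ℤ) * z| < 1 := by exact_mod_cast h5
          exact Int.abs_lt_one_iff.mp h6
        refine ⟨z, ?_⟩
        have e7 : t = (qj:ℤ) * z := by
          have := sub_eq_zero.mp e5
          linarith
        have e6 : ((b (j+1) : ℕ) : ℤ) = ((b j : ℕ) : ℤ) * (qj : ℤ) := by exact_mod_cast hqj
        rw [ht, e7, e6]
        ring
    exact main n le_rfl
  -- L → T
  have hLT : @Continuous ℤ (AddCircle (1 : ℝ)) tLin _ χ →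
      @Continuous ℤ (AddCircle (1 : ℝ)) tTau _ χ := by
    intro hc
    apply contOfZero tTau hTaug
    have h0 : Tendsto χ (@nhds ℤ tLin 0) (nhds 0) := by
      have := @Continuous.tendsto ℤ (AddCircle (1:ℝ)) tLin _ χ hc 0
      rwa [map_zero] at this
    exact h0.mono_left hnhds
  -- T → E
  have hTE : @Continuous ℤ (AddCircle (1 : ℝ)) tTau _ χ →
      (∃ (a : ℤ) (n : ℕ), ∀ k : ℤ, χ k = ((a * k / (b n : ℝ) : ℝ) : AddCircle (1:ℝ))) := by
    intro hc
    have h0 : Tendsto χ (@nhds ℤ tTau 0) (nhds 0) := by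
      have := @Continuous.tendsto ℤ (AddCircle (1:ℝ)) tTau _ χ hc 0
      rwa [map_zero] at this
    have H : ∀ δ : ℝ, 0 < δ → ∃ m : ℕ, 0 < m ∧ ∀ k : ℤ,
        (∀ n : ℕ, ∃ z : ℤ, |(k:ℝ)/(b n) - z| ≤ 1/(4*m)) →
        ‖(((k:ℝ)*x : ℝ) : AddCircle (1:ℝ))‖ ≤ δ := by
      intro δ hδ
      have hball : Metric.closedBall (0 : AddCircle (1:ℝ)) δ ∈ nhds (0 : AddCircle (1:ℝ)) :=
        Metric.closedBall_mem_nhds _ hδ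
      have hpre : χ ⁻¹' (Metric.closedBall (0 : AddCircle (1:ℝ)) δ) ∈ @nhds ℤ tTau 0 := h0 hball
      rw [hTaub.mem_iff] at hpre
      obtain ⟨m, hm, hsub⟩ := hpre
      refine ⟨m, hm, fun k hk => ?_⟩
      have hmem : k ∈ {k : ℤ | ∀ n : ℕ, ∃ z : ℤ, |(k : ℝ) / b n - z| ≤ 1 / (4 * m)} := hk
      have := hsub hmem
      simp only [Set.mem_preimage, Metric.mem_closedBall] at this
      rw [dist_zero_right] at this
      rwa [hχ k] at this
    obtain ⟨n, a, hax⟩ := key b hb hinf x H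
    refine ⟨a, n, fun k => ?_⟩
    rw [hχ k]
    congr 1
    have hbn : (b n : ℝ) ≠ 0 := ne_of_gt (hbposR n)
    have hx' : x = (a:ℝ) / b n := by
      rw [eq_div_iff hbn]
      rw [mul_comm] at hax
      exact hax
    rw [hx']
    ring
  exact ⟨⟨fun h => hEL (hTE h), hLT⟩, ⟨hTE, fun hE => hLT (hEL hE)⟩⟩
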